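/- Correctness of the FST formulation: define, for each node u on the trie and character c, δ'(u,c) := h(u,c) and σ'(u,c) := H(u,c). Then for any string w = c₁c₂...c_n, iterating state ← δ'(state, c_i) starting from the root ε while accumulating outputs σ'(state, c_i) (halting with output 'none' if the state becomes none) yields final state g(w) and accumulated output G(w). -/

import Mathlib

variable {α : Type*} [DecidableEq α]

/-- The longest nonempty prefix of `w` that belongs to `V` (or `[]` if none exists). -/
def maxPref (V : Finset (List α)) (w : List α) : List α :=
  ((w.inits.filter (fun p => decide (p ∈ V ∧ p ≠ []))).getLast?).getD []

/-- The suffix `q_w` of `w` obtained by removing the prefix `p_w`. -/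
def restSuffix (V : Finset (List α)) (w : List α) : List α :=
  w.drop (maxPref V w).length

/-- MaxMatch tokenization; `none` encodes the failure output `[UNK]`. -/
def maxMatch (V : Finset (List α)) (w : List α) : Option (List (List α)) :=
  if hw : w = [] then some []
  else if hp : maxPref V w = [] then none
  else
    match maxMatch V (w.drop (maxPref V w).length) with
    | none => none
    | some ts => some (maxPref V w :: ts)
  termination_by w.length
  decreasing_by
    simp only [List.length_drop]
    have h1 : 0 < (maxPref V w).length := List.length_pos_iff.mpr hp
    have h2 : 0 < w.length := List.length_pos_iff.mpr hw
    omega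

/-- `w` is "on the trie" built from `V`: it is `ε` or a prefix of a vocabulary token. -/
def OnTrie (V : Finset (List α)) (w : List α) : Prop :=
  w = [] ∨ ∃ t ∈ V, w <+: t

instance (V : Finset (List α)) (w : List α) : Decidable (OnTrie V w) := by
  unfold OnTrie; infer_instance

/-- MinPop matching: `(g w, G w)`. -/
def minPop (V : Finset (List α)) (w : List α) : Option (List α) × List (List α) :=
  if hT : OnTrie V w then (some w, [])
  else if hp : maxPref V w = [] then (none, [])
  else
    let r := minPop V (w.drop (maxPref V w).length)
    (r.1, maxPref V w :: r.2)
  termination_by w.length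
  decreasing_by
    simp only [List.length_drop]
    have hw : w ≠ [] := fun h => hT (Or.inl h)
    have h1 : 0 < (maxPref V w).length := List.length_pos_iff.mpr hp
    have h2 : 0 < w.length := List.length_pos_iff.mpr hw
    omega

/-- Failure link `f(u)`. -/
def fLink (V : Finset (List α)) (u : List α) : Option (List α) :=
  if maxPref V u = [] then none else (minPop V (restSuffix V u)).1

/-- Failure pops `F(u)`. -/
def fPops (V : Finset (List α)) (u : List α) : List (List α) :=
  if maxPref V u = [] then [] else maxPref V u :: (minPop V (restSuffix V u)).2

/-- The FST run: a left fold over the input characters, taking one state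
transition `δ'(u, c) = h(u, c) = g(u ++ [c])` per character while accumulating
the outputs `σ'(u, c) = H(u, c) = G(u ++ [c])`; once the state becomes `none`
it stays `none` and nothing more is emitted. -/
def fstRun (V : Finset (List α)) : Option (List α) → List α → Option (List α) × List (List α)
  | st, [] => (st, [])
  | none, _ :: _ => (none, [])
  | some u, c :: cs =>
    let r := minPop V (u ++ [c])
    let rest := fstRun V r.1 cs
    (rest.1, r.2 ++ rest.2)


set_option linter.unusedSectionVars false in
lemma onTrie_of_append {V : Finset (List α)} {w x : List α} (h : OnTrie V (w ++ x)) :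
    OnTrie V w := by
  rcases h with h | ⟨t, ht, hp⟩
  · exact Or.inl (List.append_eq_nil_iff.mp h).1
  · exact Or.inr ⟨t, ht, (List.prefix_append w x).trans hp⟩

lemma maxPref_append {V : Finset (List α)} {w : List α} (h : ¬ OnTrie V w) (x : List α) :
    maxPref V (w ++ x) = maxPref V w := by
  unfold maxPref
  rw [List.inits_append, List.filter_append]
  have hnil : (List.map (w ++ ·) x.inits.tail).filter (fun p => decide (p ∈ V ∧ p ≠ [])) = [] := by
    rw [List.filter_eq_nil_iff]
    rintro a ha
    simp only [List.mem_map] at ha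
    obtain ⟨s, hs, rfl⟩ := ha
    simp only [decide_eq_true_eq]
    rintro ⟨hmem, -⟩
    exact h (Or.inr ⟨w ++ s, hmem, List.prefix_append w s⟩)
  rw [hnil, List.append_nil]

lemma maxPref_prefix (V : Finset (List α)) (w : List α) : maxPref V w <+: w := by
  unfold maxPref
  cases hl : (w.inits.filter (fun p => decide (p ∈ V ∧ p ≠ []))).getLast? with
  | none => simp
  | some a =>
    simp only [Option.getD_some]
    obtain ⟨hne, rfl⟩ := List.mem_getLast?_eq_getLast (x := a) hl
    have hm := List.getLast_mem hne
    exact (List.mem_inits _ _).mp (List.mem_filter.mp hm).1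

set_option linter.unusedSectionVars false in
lemma fstRun_none (V : Finset (List α)) (cs : List α) : fstRun V none cs = (none, []) := by
  cases cs <;> rfl

lemma drop_maxPref_append {V : Finset (List α)} (w x : List α) :
    (w ++ x).drop (maxPref V w).length = w.drop (maxPref V w).length ++ x := by
  rw [List.drop_append,
    Nat.sub_eq_zero_of_le (maxPref_prefix V w).length_le, List.drop_zero]

lemma minPop_of_onTrie {V : Finset (List α)} {w : List α} (hT : OnTrie V w) :
    minPop V w = (some w, []) := by
  rw [minPop]; exact dif_pos hT

lemma minPop_of_nilPref {V : Finset (List α)} {w : List α} (hT : ¬ OnTrie V w)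
    (hp : maxPref V w = []) : minPop V w = (none, []) := by
  rw [minPop, dif_neg hT]; exact dif_pos hp

lemma minPop_of_pop {V : Finset (List α)} {w : List α} (hT : ¬ OnTrie V w)
    (hp : maxPref V w ≠ []) :
    minPop V w = ((minPop V (w.drop (maxPref V w).length)).1,
      maxPref V w :: (minPop V (w.drop (maxPref V w).length)).2) := by
  rw [minPop, dif_neg hT, dif_neg hp]

lemma minPop_fst_onTrie (V : Finset (List α)) :
    ∀ n (w : List α), w.length ≤ n → ∀ u, (minPop V w).1 = some u → OnTrie V u := by
  intro n
  induction n with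
  | zero =>
    intro w hw u h
    have hnil : w = [] := List.eq_nil_of_length_eq_zero (Nat.le_zero.mp hw)
    subst hnil
    rw [minPop_of_onTrie (Or.inl rfl)] at h
    simp only [Option.some.injEq] at h
    exact h ▸ Or.inl rfl
  | succ n ih =>
    intro w hw u h
    by_cases hT : OnTrie V w
    · rw [minPop_of_onTrie hT] at h
      simp only [Option.some.injEq] at h
      exact h ▸ hT
    · by_cases hp : maxPref V w = []
      · rw [minPop_of_nilPref hT hp] at h
        simp at h
      · rw [minPop_of_pop hT hp] at h
        have hwne : w ≠ [] := fun hnil => hT (Or.inl hnil)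
        have h1 : 0 < (maxPref V w).length := List.length_pos_iff.mpr hp
        have h2 : 0 < w.length := List.length_pos_iff.mpr hwne
        have hlen : (w.drop (maxPref V w).length).length ≤ n := by
          simp only [List.length_drop]; omega
        exact ih _ hlen u h

lemma minPop_append (V : Finset (List α)) :
    ∀ n (w : List α), w.length ≤ n → ∀ x : List α,
      minPop V (w ++ x) =
        ((minPop V w).1.elim none (fun u => (minPop V (u ++ x)).1),
         (minPop V w).2 ++ (minPop V w).1.elim [] (fun u => (minPop V (u ++ x)).2)) := by
  intro n
  induction n with
  | zero =>
    intro w hw x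
    have hnil : w = [] := List.eq_nil_of_length_eq_zero (Nat.le_zero.mp hw)
    subst hnil
    rw [minPop_of_onTrie (V := V) (Or.inl rfl)]
    simp
  | succ n ih =>
    intro w hw x
    by_cases hT : OnTrie V w
    · rw [minPop_of_onTrie hT]
      simp
    · have hT' : ¬ OnTrie V (w ++ x) := fun hh => hT (onTrie_of_append hh)
      have hmp : maxPref V (w ++ x) = maxPref V w := maxPref_append hT x
      by_cases hp : maxPref V w = []
      · rw [minPop_of_nilPref hT hp, minPop_of_nilPref hT' (hmp.trans hp)]
        simp
      · have hwne : w ≠ [] := fun hnil => hT (Or.inl hnil)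
        have h1 : 0 < (maxPref V w).length := List.length_pos_iff.mpr hp
        have h2 : 0 < w.length := List.length_pos_iff.mpr hwne
        have hlen : (w.drop (maxPref V w).length).length ≤ n := by
          simp only [List.length_drop]; omega
        rw [minPop_of_pop hT hp, minPop_of_pop hT' (fun hc => hp (hmp ▸ hc))]
        simp only [hmp, drop_maxPref_append, ih _ hlen x]
        rcases hq : (minPop V (w.drop (maxPref V w).length)).1 with _ | u' <;>
          simp [hq]

/-- iterating the FST transitions from the root `ε` over the
characters of `w` yields final state `g(w)` and accumulated output `G(w)`. -/
theorem stmt19 (V : Finset (List α)) (hV : ∀ t ∈ V, t ≠ []) (w : List α) :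
    fstRun V (some []) w = minPop V w := by
  have key : ∀ (cs u : List α), OnTrie V u → fstRun V (some u) cs = minPop V (u ++ cs) := by
    intro cs
    induction cs with
    | nil =>
      intro u hu
      rw [List.append_nil, minPop_of_onTrie hu]
      rfl
    | cons c cs ih =>
      intro u hu
      have hsplit : u ++ c :: cs = (u ++ [c]) ++ cs := by simp
      rw [hsplit, minPop_append V (u ++ [c]).length _ le_rfl cs]
      simp only [fstRun]
      rcases hr : (minPop V (u ++ [c])).1 with _ | u'
      · rw [fstRun_none]
        simp
      · rw [ih u' (minPop_fst_onTrie V _ _ le_rfl u' hr)]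
        simp
  simpa using key w [] (Or.inl rfl)
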